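/- Let A₀, A₁, A₂ be symmetric 5×5 complex matrices such that the fifth row and fifth column of A₀ are zero and the (5,5)-entries of A₁ and A₂ are zero. Let G(λ₀, λ₁, λ₂) = det(λ₀A₀ + λ₁A₁ + λ₂A₂). Then G(1,0,0) = 0 and all three first-order partial derivatives ∂G/∂λ₀, ∂G/∂λ₁, ∂G/∂λ₂ vanish at (1,0,0); that is, the point [1:0:0] is a singular point of the plane quintic curve {G = 0} in ℙ². -/

import Mathlib

open MvPolynomial

/-- The determinant `G(λ₀, λ₁, λ₂) = det(λ₀ A₀ + λ₁ A₁ + λ₂ A₂)` of a net of quadrics in `ℙ⁴`,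
regarded as a polynomial in the three variables `λ₀, λ₁, λ₂`. -/
noncomputable def netDet (A₀ A₁ A₂ : Matrix (Fin 5) (Fin 5) ℂ) : MvPolynomial (Fin 3) ℂ :=
  Matrix.det (Matrix.of fun i j =>
    X 0 * C (A₀ i j) + X 1 * C (A₁ i j) + X 2 * C (A₂ i j))

/-- Let `A₀, A₁, A₂` be symmetric `5×5` complex matrices with the fifth row and column of `A₀`
zero and the `(5,5)`-entries of `A₁`, `A₂` zero.  Then `G = det(λ₀A₀ + λ₁A₁ + λ₂A₂)` vanishes at
`(1,0,0)` together with all three of its first-order partial derivatives; i.e. `[1:0:0]` is a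
singular point of the discriminant quintic `{G = 0} ⊂ ℙ²`. -/
theorem stmt3 (A₀ A₁ A₂ : Matrix (Fin 5) (Fin 5) ℂ)
    (h₀ : A₀.IsSymm) (h₁ : A₁.IsSymm) (h₂ : A₂.IsSymm)
    (h₀row : ∀ j, A₀ 4 j = 0) (h₀col : ∀ i, A₀ i 4 = 0)
    (h₁55 : A₁ 4 4 = 0) (h₂55 : A₂ 4 4 = 0) :
    MvPolynomial.eval (![1, 0, 0] : Fin 3 → ℂ) (netDet A₀ A₁ A₂) = 0 ∧
    ∀ i : Fin 3,
      MvPolynomial.eval (![1, 0, 0] : Fin 3 → ℂ)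
        (MvPolynomial.pderiv i (netDet A₀ A₁ A₂)) = 0 := by
  set I : Ideal (MvPolynomial (Fin 3) ℂ) := Ideal.span {X 1, X 2} with hI
  -- evaluation kills I
  have hevalI : ∀ p ∈ I, eval (![1, 0, 0] : Fin 3 → ℂ) p = 0 := by
    intro p hp
    have hle : I ≤ RingHom.ker (eval (![1, 0, 0] : Fin 3 → ℂ)) := by
      rw [hI, Ideal.span_le]
      rintro q hq
      rcases hq with rfl | rfl <;> simp [RingHom.mem_ker]
    exact hle hp
  -- the matrix
  set M : Matrix (Fin 5) (Fin 5) (MvPolynomial (Fin 3) ℂ) :=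
    Matrix.of fun i j => X 0 * C (A₀ i j) + X 1 * C (A₁ i j) + X 2 * C (A₂ i j) with hM
  have hrow : ∀ j : Fin 5, M 4 j ∈ I := by
    intro j
    have : M 4 j = X 1 * C (A₁ 4 j) + X 2 * C (A₂ 4 j) := by
      simp [hM, h₀row j]
    rw [this]
    exact Ideal.add_mem _
      (Ideal.mul_mem_right _ _ (Ideal.subset_span (by simp)))
      (Ideal.mul_mem_right _ _ (Ideal.subset_span (by simp)))
  have hcol : ∀ i : Fin 5, M i 4 ∈ I := by
    intro i
    have : M i 4 = X 1 * C (A₁ i 4) + X 2 * C (A₂ i 4) := by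
      simp [hM, h₀col i]
    rw [this]
    exact Ideal.add_mem _
      (Ideal.mul_mem_right _ _ (Ideal.subset_span (by simp)))
      (Ideal.mul_mem_right _ _ (Ideal.subset_span (by simp)))
  have hM44 : M 4 4 = 0 := by
    simp [hM, h₀row 4, h₁55, h₂55]
  -- the determinant lies in I * I
  have hmem : netDet A₀ A₁ A₂ ∈ I * I := by
    rw [netDet, ← hM, Matrix.det_apply']
    refine Ideal.sum_mem _ ?_
    intro σ _
    refine Ideal.mul_mem_left _ _ ?_
    by_cases h4 : σ 4 = 4
    · have : (∏ i, M (σ i) i) = 0 := by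
        refine Finset.prod_eq_zero (Finset.mem_univ (4 : Fin 5)) ?_
        rw [h4, hM44]
      rw [this]; exact Submodule.zero_mem _
    · -- factor out i = 4 and i = σ⁻¹ 4
      have hne : σ⁻¹ 4 ≠ 4 := fun h => h4 (by
        have := congrArg σ h
        rw [Equiv.Perm.inv_def, Equiv.apply_symm_apply] at this
        exact this.symm)
      have hmem4 : (σ⁻¹ 4 : Fin 5) ∈ Finset.univ.erase (4 : Fin 5) :=
        Finset.mem_erase.mpr ⟨hne, Finset.mem_univ _⟩
      have e1 : (∏ i, M (σ i) i) =
          M (σ 4) 4 * (M (σ (σ⁻¹ 4)) (σ⁻¹ 4) *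
            ∏ i ∈ (Finset.univ.erase (4 : Fin 5)).erase (σ⁻¹ 4), M (σ i) i) := by
        rw [← Finset.mul_prod_erase _ _ (Finset.mem_univ (4 : Fin 5)),
          ← Finset.mul_prod_erase _ _ hmem4]
      rw [e1, ← mul_assoc]
      refine Ideal.mul_mem_right _ _ ?_
      exact Ideal.mul_mem_mul (hcol (σ 4)) (by rw [Equiv.Perm.inv_def, Equiv.apply_symm_apply]; exact hrow _)
  have hII_le : I * I ≤ I := Ideal.mul_le_left
  constructor
  · exact hevalI _ (hII_le hmem)
  · intro i
    have hd : pderiv i (netDet A₀ A₁ A₂) ∈ I := by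
      refine Submodule.mul_induction_on hmem ?_ ?_
      · intro a ha b hb
        rw [pderiv_mul]
        exact Ideal.add_mem _ (Ideal.mul_mem_left _ _ hb) (Ideal.mul_mem_right _ _ ha)
      · intro x y hx hy
        rw [map_add]
        exact Ideal.add_mem _ hx hy
    exact hevalI _ hd
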